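/- Let $\lambda_n > 0$ and let $z : [0, \infty) \to \mathbb{R}$ be differentiable with $z'(s) \leq \lambda_n z(s) + h(s)$ for all $s \geq 0$, where $h \geq 0$ and $N := \int_0^\infty e^{-\lambda_n s} h(s)\,ds < \infty$. Suppose moreover that there exists a differentiable function $y : [0,\infty) \to [0, \infty)$ with $y(s_1) > 0$ for some $s_1$, such that $y'(s) \geq -4 z(s) + C y(s)^{(p+1)/2}$ for all $s$ (with $C > 0$, $p > 1$). Then $z(s) \geq -N e^{\lambda_n s}$ for all $s \geq 0$. -/

import Mathlib

open MeasureTheory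

set_option maxHeartbeats 1000000 in
theorem stmt_4 (lamn C p s₁ : ℝ) (hlam : 0 < lamn) (hC : 0 < C) (hp : 1 < p) (hs₁ : 0 ≤ s₁)
    (z z' h : ℝ → ℝ)
    (hzd : ∀ s ∈ Set.Ici (0:ℝ), HasDerivWithinAt z (z' s) (Set.Ici 0) s)
    (hz' : ∀ s ∈ Set.Ici (0:ℝ), z' s ≤ lamn * z s + h s)
    (hh : ∀ s ∈ Set.Ici (0:ℝ), 0 ≤ h s)
    (hint : IntegrableOn (fun s => Real.exp (-lamn * s) * h s) (Set.Ioi 0))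
    (y y' : ℝ → ℝ)
    (hyd : ∀ s ∈ Set.Ici (0:ℝ), HasDerivWithinAt y (y' s) (Set.Ici 0) s)
    (hynn : ∀ s ∈ Set.Ici (0:ℝ), 0 ≤ y s)
    (hy₁ : 0 < y s₁)
    (hy' : ∀ s ∈ Set.Ici (0:ℝ), -4 * z s + C * y s ^ ((p + 1) / 2) ≤ y' s) :
    ∀ s ∈ Set.Ici (0:ℝ),
      -(∫ τ in Set.Ioi (0:ℝ), Real.exp (-lamn * τ) * h τ) * Real.exp (lamn * s) ≤ z s := by
  set φ : ℝ → ℝ := fun τ => Real.exp (-lamn * τ) * h τ with hφdef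
  set N : ℝ := ∫ τ in Set.Ioi (0:ℝ), φ τ with hNdef
  by_contra hcon
  push_neg at hcon
  obtain ⟨s₀, hs₀, hzs₀⟩ := hcon
  simp only [Set.mem_Ici] at hs₀
  have hφnn : ∀ τ ∈ Set.Ioi (0:ℝ), 0 ≤ φ τ := fun τ hτ =>
    mul_nonneg (Real.exp_pos _).le (hh τ (Set.mem_Ici.mpr (le_of_lt (Set.mem_Ioi.mp hτ))))
  have hNnn : 0 ≤ N := setIntegral_nonneg measurableSet_Ioi hφnn
  -- the function g
  set g : ℝ → ℝ := fun s => Real.exp (-lamn * s) * z s with hgdef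
  set g' : ℝ → ℝ := fun s =>
      Real.exp (-lamn * s) * (-lamn) * z s + Real.exp (-lamn * s) * z' s with hg'def
  have hed : ∀ s : ℝ, HasDerivAt (fun t => Real.exp (-lamn * t)) (Real.exp (-lamn * s) * (-lamn)) s := by
    intro s
    have h1 : HasDerivAt (fun t : ℝ => -lamn * t) (-lamn) s := by
      simpa using (hasDerivAt_id s).const_mul (-lamn)
    simpa using h1.exp
  have hgd : ∀ s ∈ Set.Ici (0:ℝ), HasDerivWithinAt g (g' s) (Set.Ici 0) s := by
    intro s hs
    exact ((hed s).hasDerivWithinAt).mul (hzd s hs)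
  have hg'le : ∀ s ∈ Set.Ici (0:ℝ), g' s ≤ φ s := by
    intro s hs
    have h1 := hz' s hs
    have h2 := Real.exp_pos (-lamn * s)
    simp only [hg'def, hφdef]
    nlinarith
  -- Gronwall: g s ≤ g s₀ + N for s ≥ s₀
  have hgron : ∀ s, s₀ ≤ s → g s ≤ g s₀ + N := by
    intro s hs
    have hsub : Set.Icc s₀ s ⊆ Set.Ici (0:ℝ) := fun x hx => le_trans hs₀ hx.1
    have h1 : g s - g s₀ ≤ ∫ τ in s₀..s, φ τ := by
      apply intervalIntegral.sub_le_integral_of_hasDeriv_right_of_le hs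
      · exact fun x hx => ((hgd x (hsub hx)).continuousWithinAt).mono hsub
      · intro x hx
        exact (hgd x (le_trans hs₀ hx.1.le)).mono (fun t ht => le_trans (le_trans hs₀ hx.1.le) ht.le)
      · rw [integrableOn_Icc_iff_integrableOn_Ioc]
        exact hint.mono_set (fun t ht => lt_of_le_of_lt hs₀ ht.1)
      · exact fun x hx => hg'le x (le_trans hs₀ hx.1.le)
    have h2 : (∫ τ in s₀..s, φ τ) ≤ N := by
      rw [intervalIntegral.integral_of_le hs]
      apply setIntegral_mono_set hint
      · filter_upwards [ae_restrict_mem measurableSet_Ioi] with x hx using hφnn x hx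
      · exact HasSubset.Subset.eventuallyLE (fun t ht => lt_of_le_of_lt hs₀ ht.1)
    linarith
  -- g s₀ < -N
  have hexp1 : Real.exp (-lamn * s₀) * Real.exp (lamn * s₀) = 1 := by
    rw [← Real.exp_add]; ring_nf; exact Real.exp_zero
  have hgs₀ : g s₀ < -N := by
    have h2 := Real.exp_pos (-lamn * s₀)
    simp only [hgdef]
    nlinarith
  set δ : ℝ := -(g s₀ + N) with hδdef
  have hδ : 0 < δ := by simp only [hδdef]; linarith
  -- z s ≤ -δ exp(lamn s) for s ≥ s₀
  have hzneg : ∀ s, s₀ ≤ s → z s ≤ -δ * Real.exp (lamn * s) := by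
    intro s hs
    have h1 : g s ≤ -δ := by have := hgron s hs; linarith
    have hexp : Real.exp (-lamn * s) * Real.exp (lamn * s) = 1 := by
      rw [← Real.exp_add]; ring_nf; exact Real.exp_zero
    have h2 := Real.exp_pos (-lamn * s)
    have h3 := Real.exp_pos (lamn * s)
    simp only [hgdef] at h1
    nlinarith
  -- growth of y past s₀
  set q : ℝ := (p + 1) / 2 with hqdef
  have hq1 : 1 < q := by simp only [hqdef]; linarith
  set c : ℝ := 4 * δ * Real.exp (lamn * s₀) with hcdef
  have hc : 0 < c := by positivity
  have hyc : ContinuousOn y (Set.Ici s₀) := fun x hx =>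
    ((hyd x (le_trans hs₀ hx)).continuousWithinAt).mono (fun t ht => le_trans hs₀ ht)
  have hylow : ∀ x, s₀ < x → c ≤ y' x := by
    intro x hx
    have hx0 : (0:ℝ) ≤ x := le_trans hs₀ hx.le
    have h1 := hy' x hx0
    have h2 := hzneg x hx.le
    have h3 : Real.exp (lamn * s₀) ≤ Real.exp (lamn * x) :=
      Real.exp_le_exp.2 (by nlinarith)
    have h4 : 0 ≤ C * y x ^ ((p + 1) / 2) :=
      mul_nonneg hC.le (Real.rpow_nonneg (hynn x hx0) _)
    simp only [hcdef]
    nlinarith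
  have hmono1 : MonotoneOn (fun s => y s - c * s) (Set.Ici s₀) := by
    apply monotoneOn_of_hasDerivWithinAt_nonneg (convex_Ici s₀)
      (f' := fun s => y' s - c)
    · exact hyc.sub ((continuous_const.mul continuous_id).continuousOn)
    · intro x hx
      rw [interior_Ici] at hx
      have hd1 : HasDerivWithinAt y (y' x) (Set.Ioi s₀) x :=
        (hyd x (le_trans hs₀ hx.le)).mono (fun t ht => le_trans hs₀ ht.le)
      have hd2 : HasDerivWithinAt (fun s => c * s) c (Set.Ioi s₀) x := by
        simpa using ((hasDerivAt_id x).const_mul c).hasDerivWithinAt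
      rw [interior_Ici]
      exact hd1.sub hd2
    · intro x hx
      rw [interior_Ici] at hx
      have := hylow x hx
      linarith
  set s₂ : ℝ := s₀ + 1 with hs₂def
  have hs₂0 : (0:ℝ) ≤ s₂ := by simp only [hs₂def]; linarith
  have hms : s₀ ≤ s₂ := by simp only [hs₂def]; linarith
  have hys₂ : 0 < y s₂ := by
    have h1 := hmono1 Set.self_mem_Ici hms hms
    have h2 := hynn s₀ hs₀
    simp only [hs₂def] at h1 ⊢
    nlinarith
  -- y is monotone on Ici s₂
  have hsub2 : Set.Ici s₂ ⊆ Set.Ici (0:ℝ) := fun t ht => le_trans hs₂0 ht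
  have hyderiv_nonneg : ∀ x, s₂ ≤ x → 0 ≤ y' x := by
    intro x hx
    have hx0 : (0:ℝ) ≤ x := le_trans hs₂0 hx
    have h1 := hy' x hx0
    have h2 := hzneg x (by simp only [hs₂def] at hx; linarith)
    have h3 := Real.exp_pos (lamn * x)
    have h4 : 0 ≤ C * y x ^ ((p + 1) / 2) :=
      mul_nonneg hC.le (Real.rpow_nonneg (hynn x hx0) _)
    nlinarith
  have hmono2 : MonotoneOn y (Set.Ici s₂) := by
    apply monotoneOn_of_hasDerivWithinAt_nonneg (convex_Ici s₂) (f' := y')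
      (fun x hx => ((hyd x (hsub2 hx)).continuousWithinAt).mono hsub2)
    · intro x hx
      rw [interior_Ici] at hx ⊢
      exact (hyd x (hsub2 (Set.mem_Ici.mpr hx.le))).mono (fun t ht => hsub2 (Set.mem_Ici.mpr ht.le))
    · intro x hx
      rw [interior_Ici] at hx
      exact hyderiv_nonneg x hx.le
  have hypos : ∀ x ∈ Set.Ici s₂, 0 < y x := by
    intro x hx
    exact lt_of_lt_of_le hys₂ (hmono2 Set.self_mem_Ici hx hx)
  -- C * y^q ≤ y' on Ici s₂
  have hkey : ∀ x, s₂ ≤ x → C * y x ^ q ≤ y' x := by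
    intro x hx
    have hx0 : (0:ℝ) ≤ x := le_trans hs₂0 hx
    have h1 := hy' x hx0
    have h2 := hzneg x (by simp only [hs₂def] at hx; linarith)
    have h3 := Real.exp_pos (lamn * x)
    simp only [hqdef]
    nlinarith
  -- the function f = y^(1-q), u = f + (q-1)*C*s is antitone on Ici s₂
  set f : ℝ → ℝ := fun s => y s ^ (1 - q) with hfdef
  have hfpos : ∀ x ∈ Set.Ici s₂, 0 < f x := fun x hx =>
    Real.rpow_pos_of_pos (hypos x hx) _
  set u : ℝ → ℝ := fun s => f s + (q - 1) * C * s with hudef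
  have hanti : AntitoneOn u (Set.Ici s₂) := by
    apply antitoneOn_of_hasDerivWithinAt_nonpos (convex_Ici s₂)
      (f' := fun x => y' x * (1 - q) * y x ^ (1 - q - 1) + (q - 1) * C)
    · apply ContinuousOn.add
      · exact ContinuousOn.rpow_const
          (fun x hx => ((hyd x (hsub2 hx)).continuousWithinAt).mono hsub2)
          (fun x hx => Or.inl (ne_of_gt (hypos x hx)))
      · exact ((continuous_const.mul continuous_id).continuousOn)
    · intro x hx
      rw [interior_Ici] at hx ⊢
      have hyx : HasDerivWithinAt y (y' x) (Set.Ioi s₂) x :=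
        (hyd x (hsub2 (Set.mem_Ici.mpr hx.le))).mono (fun t ht => hsub2 (Set.mem_Ici.mpr ht.le))
      have hfx : HasDerivWithinAt f (y' x * (1 - q) * y x ^ (1 - q - 1)) (Set.Ioi s₂) x :=
        hyx.rpow_const (Or.inl (ne_of_gt (hypos x (Set.mem_Ici.mpr hx.le))))
      have hlin : HasDerivWithinAt (fun s => (q - 1) * C * s) ((q - 1) * C) (Set.Ioi s₂) x := by
        simpa using ((hasDerivAt_id x).const_mul ((q - 1) * C)).hasDerivWithinAt
      exact hfx.add hlin
    · intro x hx
      rw [interior_Ici] at hx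
      have hyxpos : 0 < y x := hypos x (Set.mem_Ici.mpr hx.le)
      have h1 : C * y x ^ q ≤ y' x := hkey x hx.le
      have hpow : y x ^ (1 - q - 1) * y x ^ q = 1 := by
        rw [← Real.rpow_add hyxpos]
        norm_num
      have hppos : 0 < y x ^ (1 - q - 1) := Real.rpow_pos_of_pos hyxpos _
      have h2 : C ≤ y' x * y x ^ (1 - q - 1) := by
        nlinarith [mul_le_mul_of_nonneg_right h1 hppos.le, hpow, hC]
      nlinarith [h2, hq1]
  -- contradiction: evaluate u at a large point
  set S : ℝ := s₂ + f s₂ / ((q - 1) * C) + 1 with hSdef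
  have hqC : 0 < (q - 1) * C := by nlinarith
  have hfs₂ : 0 < f s₂ := hfpos s₂ Set.self_mem_Ici
  have hSge : s₂ ≤ S := by
    simp only [hSdef]
    have : 0 ≤ f s₂ / ((q - 1) * C) := le_of_lt (div_pos hfs₂ hqC)
    linarith
  have hfS : 0 < f S := hfpos S hSge
  have hUS : f S + (q - 1) * C * S ≤ f s₂ + (q - 1) * C * s₂ :=
    hanti Set.self_mem_Ici hSge hSge
  have hSexp : (q - 1) * C * S = (q - 1) * C * s₂ + f s₂ + (q - 1) * C := by
    simp only [hSdef]
    field_simp [hqC.ne', (sub_pos.mpr hq1).ne', hC.ne']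
  linarith
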